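/- For all sufficiently large n, log((A_{n+1}/(n+1)!)/(A_n/n!)) >= log((A_n/n!)/(A_{n-1}/(n-1)!)), i.e. the sequence A_n/n! is eventually log-convex, where A_n is the number of labeled DAGs on n vertices. -/

import Mathlib

open Filter Finset

/-- A directed graph (given by its edge relation) is acyclic iff no vertex lies on a
directed cycle, i.e. the transitive closure is irreflexive. -/
def DigraphAcyclic {V : Type*} (g : V → V → Prop) : Prop :=
  ∀ a, ¬ Relation.TransGen g a a

/-- The number of labeled DAGs on `n` vertices. -/
noncomputable def dagCount (n : ℕ) : ℕ :=
  Nat.card {g : Fin n → Fin n → Bool // DigraphAcyclic fun x y => g x y = true}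

/-- The number of connected labeled DAGs on `n` vertices (connected means the
underlying undirected graph is connected). -/
noncomputable def connDagCount (n : ℕ) : ℕ :=
  Nat.card {g : Fin n → Fin n → Bool //
    (DigraphAcyclic fun x y => g x y = true) ∧
    ∀ a b : Fin n, Relation.ReflTransGen (fun x y => g x y = true ∨ g y x = true) a b}

namespace DagCountAux

def Acyc {n : ℕ} (g : Fin n → Fin n → Bool) : Prop :=
  DigraphAcyclic fun x y => g x y = true

abbrev Dag (n : ℕ) := {g : Fin n → Fin n → Bool // Acyc g}

lemma dagCount_def (n : ℕ) : dagCount n = Nat.card (Dag n) := rfl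

def IsSrc {n : ℕ} (g : Fin n → Fin n → Bool) (v : Fin n) : Prop := ∀ x, g x v = false

instance {n : ℕ} (g : Fin n → Fin n → Bool) : DecidablePred (IsSrc g) := fun _ =>
  decidable_of_iff (∀ x, g x _ = false) Iff.rfl

lemma acyc_false {n : ℕ} : Acyc (fun _ _ : Fin n => false) := by
  intro a ha
  cases ha with
  | single h => simp at h
  | tail _ h => simp at h

lemma dagCount_pos (n : ℕ) : 0 < dagCount n := by
  rw [dagCount_def]
  have : Nonempty (Dag n) := ⟨⟨fun _ _ => false, acyc_false⟩⟩
  exact Nat.card_pos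

lemma dagCount_zero : dagCount 0 = 1 := by
  rw [dagCount_def]
  have : Subsingleton (Dag 0) :=
    ⟨fun g h => Subtype.ext (funext fun x => x.elim0)⟩
  have : Nonempty (Dag 0) := ⟨⟨fun _ _ => false, acyc_false⟩⟩
  exact Nat.card_unique

lemma dagCount_one : dagCount 1 = 1 := by
  rw [dagCount_def]
  have : Subsingleton (Dag 1) := by
    constructor
    intro g h
    apply Subtype.ext
    funext x y
    have hx : x = 0 := Subsingleton.elim _ _
    have hy : y = 0 := Subsingleton.elim _ _
    subst hx; subst hy
    have hg : g.1 0 0 = false := by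
      by_contra hc
      exact g.2 0 (Relation.TransGen.single (by simpa using hc))
    have hh : h.1 0 0 = false := by
      by_contra hc
      exact h.2 0 (Relation.TransGen.single (by simpa using hc))
    rw [hg, hh]
  have : Nonempty (Dag 1) := ⟨⟨fun _ _ => false, acyc_false⟩⟩
  exact Nat.card_unique

lemma acyc_restrict {m n : ℕ} (g : Fin n → Fin n → Bool) (hg : Acyc g) (e : Fin m → Fin n) :
    Acyc (fun j k => g (e j) (e k)) := fun a ha =>
  hg (e a) (Relation.TransGen.lift e (fun _ _ hxy => hxy) _ _ ha)

lemma exists_src {n : ℕ} (g : Fin (n+1) → Fin (n+1) → Bool) (hg : Acyc g) :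
    ∃ v, IsSrc g v := by
  by_contra hcon
  push_neg at hcon
  have h' : ∀ v, ∃ x, g x v = true := by
    intro v
    by_contra hx
    push_neg at hx
    exact hcon v (fun x => by simpa using hx x)
  choose f hf using h'
  have key : ∀ k (a : Fin (n+1)),
      Relation.TransGen (fun x y => g x y = true) (f^[k+1] a) a := by
    intro k
    induction k with
    | zero => intro a; exact .single (hf a)
    | succ k ih =>
      intro a
      rw [Function.iterate_succ_apply]
      exact (ih (f a)).tail (hf a)
  obtain ⟨i, j, hij, hmap⟩ := Finite.exists_ne_map_eq_of_infinite (fun k : ℕ => f^[k] 0)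
  rcases hij.lt_or_gt with hlt | hlt
  all_goals {
    first
      | (have hiter : f^[(j - i - 1) + 1] (f^[i] 0) = f^[i] 0 := by
          rw [← Function.iterate_add_apply]
          have : (j - i - 1) + 1 + i = j := by omega
          rw [this]; exact hmap.symm)
      | (have hiter : f^[(i - j - 1) + 1] (f^[j] 0) = f^[j] 0 := by
          rw [← Function.iterate_add_apply]
          have : (i - j - 1) + 1 + j = i := by omega
          rw [this]; exact hmap)
    exact hg _ (hiter ▸ key _ _)
  }

variable {n m : ℕ}

/-- Extend a digraph on `Fin n` to `Fin (n+1)` by inserting a new source at `v`. -/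
def extg (v : Fin (n+1)) (s : Fin n → Bool) (h : Fin n → Fin n → Bool) :
    Fin (n+1) → Fin (n+1) → Bool := fun x y =>
  match finSuccEquiv' v y with
  | none => false
  | some k =>
    match finSuccEquiv' v x with
    | none => s k
    | some j => h j k

lemma extg_into (v : Fin (n+1)) (s : Fin n → Bool) (h : Fin n → Fin n → Bool) (x : Fin (n+1)) :
    extg v s h x v = false := by
  simp [extg, finSuccEquiv'_at]

lemma extg_src (v : Fin (n+1)) (s : Fin n → Bool) (h : Fin n → Fin n → Bool) (k : Fin n) :
    extg v s h v (v.succAbove k) = s k := by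
  simp [extg, finSuccEquiv'_at, finSuccEquiv'_succAbove]

lemma extg_inner (v : Fin (n+1)) (s : Fin n → Bool) (h : Fin n → Fin n → Bool) (j k : Fin n) :
    extg v s h (v.succAbove j) (v.succAbove k) = h j k := by
  simp [extg, finSuccEquiv'_succAbove]

lemma extg_acyc (v : Fin (n+1)) (s : Fin n → Bool) (h : Fin n → Fin n → Bool)
    (hh : Acyc h) : Acyc (extg v s h) := by
  set r := fun x y => extg v s h x y = true with hr
  have hne : ∀ a b, Relation.TransGen r a b → b ≠ v := by
    intro a b hab
    induction hab with
    | single e =>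
      intro hbv; subst hbv; simp only [hr, extg_into] at e; exact absurd e (by simp)
    | tail _ e ih =>
      intro hbv; subst hbv; simp only [hr, extg_into] at e; exact absurd e (by simp)
  have hdown : ∀ a b, Relation.TransGen r a b →
      ∀ j k, v.succAbove j = a → v.succAbove k = b →
      Relation.TransGen (fun j k => h j k = true) j k := by
    intro a b hab
    induction hab with
    | @single b e =>
      intro j k hj hk
      subst hj; subst hk
      refine Relation.TransGen.single ?_
      simp only [hr] at e; rwa [extg_inner] at e
    | @tail b c hab e ih =>
      intro j k hj hk
      have hbv : b ≠ v := hne _ _ hab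
      obtain ⟨k', hk'⟩ := Fin.exists_succAbove_eq hbv
      refine (ih j k' hj hk').tail ?_
      subst hk; rw [← hk'] at e
      simp only [hr] at e; rwa [extg_inner] at e
  intro a ha
  have hav : a ≠ v := hne a a ha
  obtain ⟨j, hj⟩ := Fin.exists_succAbove_eq hav
  exact hh j (hdown a a ha j j hj hj)

lemma card_fun_bool (k : ℕ) : Nat.card (Fin k → Bool) = 2 ^ k := by
  simp [Nat.card_fun, Nat.card_eq_fintype_card]

/-- Lower bound for the number of DAGs with a given source. -/
lemma Ev_lower (v : Fin (n+1)) :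
    2 ^ n * dagCount n ≤ Nat.card {g : Dag (n+1) // IsSrc g.1 v} := by
  have hmap : Function.Injective
      (fun p : (Fin n → Bool) × Dag n =>
        (⟨⟨extg v p.1 p.2.1, extg_acyc v p.1 p.2.1 p.2.2⟩,
          fun x => extg_into v p.1 p.2.1 x⟩ : {g : Dag (n+1) // IsSrc g.1 v})) := by
    rintro ⟨s₁, h₁, hh₁⟩ ⟨s₂, h₂, hh₂⟩ heq
    simp only [Subtype.mk.injEq] at heq
    have hs : s₁ = s₂ := by
      funext k
      have : extg v s₁ h₁ v (v.succAbove k) = extg v s₂ h₂ v (v.succAbove k) :=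
        congrFun (congrFun (congrArg (fun x : {g : Dag (n+1) // IsSrc g.1 v} => x.1.1) heq) v) (v.succAbove k)
      rwa [extg_src, extg_src] at this
    have hhh : h₁ = h₂ := by
      funext j k
      have : extg v s₁ h₁ (v.succAbove j) (v.succAbove k) = extg v s₂ h₂ (v.succAbove j) (v.succAbove k) :=
        congrFun (congrFun (congrArg (fun x : {g : Dag (n+1) // IsSrc g.1 v} => x.1.1) heq) (v.succAbove j)) (v.succAbove k)
      rwa [extg_inner, extg_inner] at this
    simp [hs, hhh]
  have := Nat.card_le_card_of_injective _ hmap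
  calc 2 ^ n * dagCount n = Nat.card ((Fin n → Bool) × Dag n) := by
        rw [Nat.card_prod, card_fun_bool, dagCount_def]
    _ ≤ _ := this

/-- Upper bound for the number of DAGs with two given sources. -/
lemma Evw_upper (v w : Fin (n+2)) (hvw : w ≠ v) :
    Nat.card {g : Dag (n+2) // IsSrc g.1 v ∧ IsSrc g.1 w} ≤
      2 ^ n * (2 ^ n * dagCount n) := by
  obtain ⟨w', hw'⟩ := Fin.exists_succAbove_eq hvw
  set emb : Fin n → Fin (n+2) := fun j => v.succAbove (w'.succAbove j) with hemb
  have hcover : ∀ y : Fin (n+2), y ≠ v → y ≠ w → ∃ k, emb k = y := by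
    intro y hyv hyw
    obtain ⟨k₁, hk₁⟩ := Fin.exists_succAbove_eq hyv
    have hk₁w : k₁ ≠ w' := by
      rintro rfl; exact hyw (hk₁ ▸ hw' ▸ rfl)
    obtain ⟨k, hk⟩ := Fin.exists_succAbove_eq hk₁w
    exact ⟨k, by simp only [hemb]; rw [hk, hk₁]⟩
  have hmap : Function.Injective
      (fun g : {g : Dag (n+2) // IsSrc g.1 v ∧ IsSrc g.1 w} =>
        ((fun j => g.1.1 v (emb j), fun j => g.1.1 w (emb j),
          (⟨fun j k => g.1.1 (emb j) (emb k),
            acyc_restrict g.1.1 g.1.2 emb⟩ : Dag n)) :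
          (Fin n → Bool) × (Fin n → Bool) × Dag n)) := by
    rintro ⟨⟨g₁, hg₁⟩, hv₁, hw₁⟩ ⟨⟨g₂, hg₂⟩, hv₂, hw₂⟩ heq
    simp only [Prod.mk.injEq, Subtype.mk.injEq] at heq
    obtain ⟨e1, e2, e3⟩ := heq
    apply Subtype.ext; apply Subtype.ext
    funext x y
    by_cases hyv : y = v
    · subst hyv; rw [hv₁ x, hv₂ x]
    by_cases hyw : y = w
    · subst hyw; rw [hw₁ x, hw₂ x]
    obtain ⟨k, rfl⟩ := hcover y hyv hyw
    by_cases hxv : x = v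
    · subst hxv; exact congrFun e1 k
    by_cases hxw : x = w
    · subst hxw; exact congrFun e2 k
    obtain ⟨j, rfl⟩ := hcover x hxv hxw
    exact congrFun (congrFun e3 j) k
  have := Nat.card_le_card_of_injective _ hmap
  calc Nat.card {g : Dag (n+2) // IsSrc g.1 v ∧ IsSrc g.1 w}
      ≤ Nat.card ((Fin n → Bool) × (Fin n → Bool) × Dag n) := this
    _ = 2 ^ n * (2 ^ n * dagCount n) := by
        rw [Nat.card_prod, Nat.card_prod, card_fun_bool, dagCount_def]

/-- Global upper bound: remove the least source. -/
lemma dag_upper (n : ℕ) : dagCount (n+1) ≤ (n+1) * (2 ^ n * dagCount n) := by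
  have hne : ∀ g : Dag (n+1), (univ.filter (IsSrc g.1)).Nonempty := by
    intro g
    obtain ⟨v, hv⟩ := exists_src g.1 g.2
    exact ⟨v, by simp [hv]⟩
  set minSrc : Dag (n+1) → Fin (n+1) := fun g => (univ.filter (IsSrc g.1)).min' (hne g)
    with hminSrc
  have hsrc : ∀ g : Dag (n+1), IsSrc g.1 (minSrc g) := by
    intro g
    have := Finset.min'_mem (univ.filter (IsSrc g.1)) (hne g)
    simpa using this
  have hmap : Function.Injective
      (fun g : Dag (n+1) =>
        ((minSrc g, fun k => g.1 (minSrc g) ((minSrc g).succAbove k),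
          (⟨fun j k => g.1 ((minSrc g).succAbove j) ((minSrc g).succAbove k),
            acyc_restrict g.1 g.2 _⟩ : Dag n)) :
          Fin (n+1) × (Fin n → Bool) × Dag n)) := by
    rintro g₁ g₂ heq
    simp only [Prod.mk.injEq, Subtype.mk.injEq] at heq
    obtain ⟨e0, e1, e3⟩ := heq
    apply Subtype.ext
    funext x y
    by_cases hyv : y = minSrc g₁
    · subst hyv
      rw [hsrc g₁ x]
      have := hsrc g₂ x
      rw [e0] at *
      rw [this]
    obtain ⟨k, rfl⟩ := Fin.exists_succAbove_eq (Ne.symm (fun h => hyv h.symm))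
    by_cases hxv : x = minSrc g₁
    · subst hxv
      have h1 := congrFun e1 k
      rw [e0] at *
      exact h1
    obtain ⟨j, rfl⟩ := Fin.exists_succAbove_eq (Ne.symm (fun h => hxv h.symm))
    have h3 := congrFun (congrFun e3 j) k
    rw [e0] at *
    exact h3
  have := Nat.card_le_card_of_injective _ hmap
  calc dagCount (n+1) = Nat.card (Dag (n+1)) := dagCount_def _
    _ ≤ Nat.card (Fin (n+1) × (Fin n → Bool) × Dag n) := this
    _ = (n+1) * (2 ^ n * dagCount n) := by
        rw [Nat.card_prod, Nat.card_prod, card_fun_bool, dagCount_def,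
          Nat.card_eq_fintype_card, Fintype.card_fin]

noncomputable instance (n : ℕ) : Fintype (Dag n) := Fintype.ofFinite _

lemma natCard_sigma {ι : Type*} [Fintype ι] (f : ι → Type*) [∀ i, Finite (f i)] :
    Nat.card (Σ i, f i) = ∑ i, Nat.card (f i) := by
  letI : ∀ i, Fintype (f i) := fun i => Fintype.ofFinite _
  simp [Nat.card_eq_fintype_card]

def prodSubtypeComm {α β : Type*} (P : α → β → Prop) :
    {p : α × β // P p.1 p.2} ≃ {p : β × α // P p.2 p.1} where
  toFun x := ⟨⟨x.1.2, x.1.1⟩, x.2⟩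
  invFun x := ⟨⟨x.1.2, x.1.1⟩, x.2⟩
  left_inv := fun ⟨⟨a, b⟩, h⟩ => rfl
  right_inv := fun ⟨⟨a, b⟩, h⟩ => rfl

lemma sum_card_eq {α β : Type*} [Fintype α] [Finite β] (P : α → β → Prop) :
    Nat.card {p : α × β // P p.1 p.2} = ∑ a, Nat.card {b // P a b} := by
  rw [Nat.card_congr (Equiv.subtypeProdEquivSigmaSubtype P), natCard_sigma]

lemma sum_card_swap {α β : Type*} [Fintype α] [Fintype β] (P : α → β → Prop) :
    ∑ a, Nat.card {b // P a b} = ∑ b, Nat.card {a // P a b} := by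
  rw [← sum_card_eq P, Nat.card_congr (prodSubtypeComm P),
    sum_card_eq (fun (b : β) (a : α) => P a b)]

lemma card_subtype_mono {α : Type*} [Finite α] {P Q : α → Prop} (h : ∀ a, P a → Q a) :
    Nat.card {a // P a} ≤ Nat.card {a // Q a} :=
  Nat.card_le_card_of_injective (Subtype.map id h)
    (Subtype.map_injective h Function.injective_id)

lemma pointwise (g : Fin (n+1) → Fin (n+1) → Bool) (hg : Acyc g) :
    2 * Nat.card {v // IsSrc g v} ≤
      2 + Nat.card {q : Fin (n+1) × Fin (n+1) //
        q.1 ≠ q.2 ∧ IsSrc g q.1 ∧ IsSrc g q.2} := by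
  obtain ⟨v₀, hv₀⟩ := exists_src g hg
  have hmap : Function.Injective
      (fun p : {v // IsSrc g v} × Bool =>
        (if h : p.1.1 = v₀ then Sum.inl p.2
          else Sum.inr (cond p.2 ⟨(v₀, p.1.1), ⟨fun he => h he.symm, hv₀, p.1.2⟩⟩
            ⟨(p.1.1, v₀), ⟨h, p.1.2, hv₀⟩⟩) : Bool ⊕ {q : Fin (n+1) × Fin (n+1) // q.1 ≠ q.2 ∧ IsSrc g q.1 ∧ IsSrc g q.2})) := by
    rintro ⟨⟨w₁, h₁⟩, b₁⟩ ⟨⟨w₂, h₂⟩, b₂⟩ heq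
    by_cases d₁ : w₁ = v₀ <;> by_cases d₂ : w₂ = v₀ <;>
      simp only [d₁, d₂, dif_pos, dif_neg, not_false_iff] at heq
    · subst d₁; subst d₂
      simp only [Sum.inl.injEq] at heq
      simp [heq]
    · cases b₂ <;> simp at heq
    · cases b₁ <;> simp at heq
    · cases b₁ <;> cases b₂ <;>
        simp only [Bool.cond_false, Bool.cond_true, Sum.inr.injEq,
          Subtype.mk.injEq, Prod.mk.injEq] at heq <;> simp_all
  have hle := Nat.card_le_card_of_injective _ hmap
  rw [Nat.card_prod, Nat.card_sum] at hle
  simpa [mul_comm, Nat.card_eq_fintype_card] using hle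

lemma rec2 (m : ℕ) :
    2 * ((m+2) * (2^(m+1) * dagCount (m+1))) ≤
      2 * dagCount (m+2) + ((m+2) * (m+1)) * (2^m * (2^m * dagCount m)) := by
  set B := 2^m * (2^m * dagCount m) with hB
  have h1 : (m+2) * (2^(m+1) * dagCount (m+1)) ≤
      ∑ v : Fin (m+2), Nat.card {g : Dag (m+2) // IsSrc g.1 v} := by
    have := Finset.card_nsmul_le_sum Finset.univ
      (fun v : Fin (m+2) => Nat.card {g : Dag (m+2) // IsSrc g.1 v})
      (2^(m+1) * dagCount (m+1)) (fun v _ => Ev_lower v)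
    simpa [smul_eq_mul] using this
  have hswap1 : ∑ v : Fin (m+2), Nat.card {g : Dag (m+2) // IsSrc g.1 v} =
      ∑ g : Dag (m+2), Nat.card {v // IsSrc g.1 v} :=
    sum_card_swap (fun (v : Fin (m+2)) (g : Dag (m+2)) => IsSrc g.1 v)
  have h2 : ∑ g : Dag (m+2), 2 * Nat.card {v // IsSrc g.1 v} ≤
      ∑ g : Dag (m+2), (2 + Nat.card {q : Fin (m+2) × Fin (m+2) // q.1 ≠ q.2 ∧ IsSrc g.1 q.1 ∧ IsSrc g.1 q.2}) :=
    Finset.sum_le_sum (fun g _ => pointwise g.1 g.2)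
  have h3 : ∑ g : Dag (m+2), (2 + Nat.card {q : Fin (m+2) × Fin (m+2) // q.1 ≠ q.2 ∧ IsSrc g.1 q.1 ∧ IsSrc g.1 q.2}) =
      2 * dagCount (m+2) + ∑ g : Dag (m+2), Nat.card {q : Fin (m+2) × Fin (m+2) // q.1 ≠ q.2 ∧ IsSrc g.1 q.1 ∧ IsSrc g.1 q.2} := by
    rw [Finset.sum_add_distrib, Finset.sum_const, Finset.card_univ, smul_eq_mul,
      dagCount_def, Nat.card_eq_fintype_card, mul_comm]
  have h4 : ∑ g : Dag (m+2), Nat.card {q : Fin (m+2) × Fin (m+2) // q.1 ≠ q.2 ∧ IsSrc g.1 q.1 ∧ IsSrc g.1 q.2} =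
      ∑ q : Fin (m+2) × Fin (m+2), Nat.card {g : Dag (m+2) // q.1 ≠ q.2 ∧ IsSrc g.1 q.1 ∧ IsSrc g.1 q.2} :=
    sum_card_swap (fun (g : Dag (m+2)) (q : Fin (m+2) × Fin (m+2)) =>
      q.1 ≠ q.2 ∧ IsSrc g.1 q.1 ∧ IsSrc g.1 q.2)
  have h5 : ∑ q : Fin (m+2) × Fin (m+2), Nat.card {g : Dag (m+2) // q.1 ≠ q.2 ∧ IsSrc g.1 q.1 ∧ IsSrc g.1 q.2} ≤
      ((m+2) * (m+1)) * B := by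
    have hzero : ∀ q ∈ (Finset.univ : Finset (Fin (m+2) × Fin (m+2))),
        q ∉ (Finset.univ : Finset (Fin (m+2))).offDiag →
        Nat.card {g : Dag (m+2) // q.1 ≠ q.2 ∧ IsSrc g.1 q.1 ∧ IsSrc g.1 q.2} = 0 := by
      intro q _ hq
      have hdiag : q.1 = q.2 := by
        by_contra hne
        exact hq (Finset.mem_offDiag.2 ⟨Finset.mem_univ _, Finset.mem_univ _, hne⟩)
      haveI : IsEmpty {g : Dag (m+2) // q.1 ≠ q.2 ∧ IsSrc g.1 q.1 ∧ IsSrc g.1 q.2} := by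
        constructor; rintro ⟨gg, hgg⟩; exact hgg.1 hdiag
      exact Nat.card_of_isEmpty
    have heq := Finset.sum_subset
      (Finset.subset_univ ((Finset.univ : Finset (Fin (m+2))).offDiag)) hzero
    rw [← heq]
    have hbd : ∀ q ∈ (Finset.univ : Finset (Fin (m+2))).offDiag,
        Nat.card {g : Dag (m+2) // q.1 ≠ q.2 ∧ IsSrc g.1 q.1 ∧ IsSrc g.1 q.2} ≤ B := by
      intro q hq
      obtain ⟨-, -, hne⟩ := Finset.mem_offDiag.1 hq
      refine le_trans (card_subtype_mono (Q := fun g : Dag (m+2) => IsSrc g.1 q.1 ∧ IsSrc g.1 q.2)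
        (fun g hg => ⟨hg.2.1, hg.2.2⟩)) ?_
      exact Evw_upper q.1 q.2 (Ne.symm hne)
    have := Finset.sum_le_card_nsmul _ _ _ hbd
    rw [smul_eq_mul] at this
    refine le_trans this ?_
    have hcard : ((Finset.univ : Finset (Fin (m+2))).offDiag).card = (m+2) * (m+1) := by
      rw [Finset.offDiag_card, Finset.card_univ, Fintype.card_fin]
      have h : (m+2) * (m+2) = (m+2) * (m+1) + (m+2) := by ring
      omega
    rw [hcard]
  calc 2 * ((m+2) * (2^(m+1) * dagCount (m+1)))
      ≤ 2 * ∑ v : Fin (m+2), Nat.card {g : Dag (m+2) // IsSrc g.1 v} :=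
        Nat.mul_le_mul_left 2 h1
    _ = ∑ g : Dag (m+2), 2 * Nat.card {v // IsSrc g.1 v} := by
        rw [hswap1, Finset.mul_sum]
    _ ≤ 2 * dagCount (m+2) + ∑ g : Dag (m+2), Nat.card {q : Fin (m+2) × Fin (m+2) // q.1 ≠ q.2 ∧ IsSrc g.1 q.1 ∧ IsSrc g.1 q.2} := by
        rw [← h3]; exact h2
    _ ≤ 2 * dagCount (m+2) + ((m+2) * (m+1)) * B := by
        rw [h4]; exact Nat.add_le_add_left h5 _

lemma claim : ∀ m : ℕ, (m+1) * 2^(m+1) * dagCount m ≤ 4 * dagCount (m+1) := by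
  intro m
  induction m with
  | zero => rw [dagCount_zero, dagCount_one]; norm_num
  | succ m ih =>
    have h1 := rec2 m
    set a := dagCount m with hg1
    set b := dagCount (m+1) with hg2
    set c := dagCount (m+2) with hg3
    set p := 2^m with hp
    have hpow1 : 2^(m+1) = 2*p := by rw [hp, pow_succ]; ring
    have hpow2 : 2^(m+1+1) = 4*p := by rw [hp, pow_succ, pow_succ]; ring
    rw [hpow1] at h1 ih
    rw [hpow2]
    nlinarith [Nat.mul_le_mul_left ((m+2)*p) ih, h1]

lemma key (k : ℕ) :
    (k+2) * (dagCount (k+1) * dagCount (k+1)) ≤ (k+1) * (dagCount k * dagCount (k+2)) := by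
  have h1 := claim (k+1)
  have h2 := dag_upper k
  set a := dagCount k with hg1
  set b := dagCount (k+1) with hg2
  set c := dagCount (k+2) with hg3
  have hmul := Nat.mul_le_mul h1 h2
  have h4 : (4*2^k) * ((k+2)*(b*b)) ≤ (4*2^k) * ((k+1)*(a*c)) := by
    calc (4*2^k) * ((k+2)*(b*b)) = ((k+1+1) * 2^(k+1+1) * b) * b := by
          rw [pow_succ, pow_succ]; ring
      _ ≤ (4*c) * ((k+1)*(2^k*a)) := hmul
      _ = (4*2^k) * ((k+1)*(a*c)) := by ring
  exact Nat.le_of_mul_le_mul_left h4 (by positivity)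

end DagCountAux

theorem dagCount_div_factorial_eventually_logConvex :
    ∀ᶠ n : ℕ in atTop,
      Real.log (((dagCount (n + 1) : ℝ) / (n + 1).factorial) /
          ((dagCount n : ℝ) / n.factorial)) ≥
        Real.log (((dagCount n : ℝ) / n.factorial) /
          ((dagCount (n - 1) : ℝ) / (n - 1).factorial)) := by
  filter_upwards [eventually_ge_atTop 1] with n hn
  obtain ⟨k, rfl⟩ : ∃ k, n = k + 1 := ⟨n - 1, by omega⟩
  simp only [Nat.add_sub_cancel]
  have ha : (0:ℝ) < (dagCount k : ℝ) := by exact_mod_cast DagCountAux.dagCount_pos k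
  have hb : (0:ℝ) < (dagCount (k+1) : ℝ) := by exact_mod_cast DagCountAux.dagCount_pos (k+1)
  have hc : (0:ℝ) < (dagCount (k+1+1) : ℝ) := by exact_mod_cast DagCountAux.dagCount_pos (k+2)
  have hf0 : (0:ℝ) < (k.factorial : ℝ) := by exact_mod_cast k.factorial_pos
  have hf1 : (0:ℝ) < ((k+1).factorial : ℝ) := by exact_mod_cast (k+1).factorial_pos
  have hf2 : (0:ℝ) < ((k+1+1).factorial : ℝ) := by exact_mod_cast (k+2).factorial_pos
  have hkeyR : ((k:ℝ)+2) * ((dagCount (k+1) : ℝ) * (dagCount (k+1) : ℝ)) ≤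
      ((k:ℝ)+1) * ((dagCount k : ℝ) * (dagCount (k+1+1) : ℝ)) := by
    exact_mod_cast DagCountAux.key k
  have hfs1 : ((k+1).factorial : ℝ) = ((k:ℝ)+1) * (k.factorial : ℝ) := by
    exact_mod_cast Nat.factorial_succ k
  have hfs2 : ((k+1+1).factorial : ℝ) = ((k:ℝ)+2) * ((k+1).factorial : ℝ) := by
    have := Nat.factorial_succ (k+1)
    push_cast [this]; ring
  rw [ge_iff_le]
  apply Real.log_le_log
  · exact div_pos (div_pos hb hf1) (div_pos ha hf0)
  · rw [div_le_div_iff₀ (div_pos ha hf0) (div_pos hb hf1), div_mul_div_comm,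
      div_mul_div_comm, div_le_div_iff₀ (by positivity) (by positivity)]
    rw [hfs2, hfs1]
    nlinarith [mul_le_mul_of_nonneg_right hkeyR
      (le_of_lt (mul_pos hf1 hf0)), hf0.le, hf1.le]
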